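/- Kuhn's equivalence theorem for W-games: consider a causal and solvable finite W-game, and a player p enjoying perfect recall. Then for every mixed W-strategy μ^p ∈ Δ(Λ^p) there exists a product-mixed W-strategy π^p = ⊗_{a∈A^p} π_a with π_a ∈ Δ(Λ_a), such that for every choice of mixed strategies μ^{-p} of the other players and every ω ∈ Ω, the pushforward distributions on ∏_{b∈A} U_b coincide: Q^ω_{(μ^{-p}, μ^p)} = Q^ω_{(μ^{-p}, π^p)}, where Q^ω_ν is the pushforward of the product probability ν on Λ = ∏_q Λ^q under the solution map λ ↦ M_λ(ω). -/

import Mathlib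

open scoped BigOperators
attribute [local instance] Classical.propDecidable

def IsSetField {D : Type*} (F : Set (Set D)) : Prop :=
  Set.univ ∈ F ∧ (∀ s ∈ F, sᶜ ∈ F) ∧ ∀ s ∈ F, ∀ t ∈ F, s ∪ t ∈ F

def IsSetAtom {D : Type*} (F : Set (Set D)) (G : Set D) : Prop :=
  G ∈ F ∧ G ≠ ∅ ∧ ∀ K ∈ F, K ⊆ G → K = ∅ ∨ K = G

def Meas {D α : Type*} (F : Set (Set D)) (f : D → α) : Prop :=
  ∀ x : α, f ⁻¹' {x} ∈ F

/-- The field generated by a collection of subsets: the intersection of all fields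
containing it. -/
def genField {D : Type*} (S : Set (Set D)) : Set (Set D) :=
  {X | ∀ F : Set (Set D), IsSetField F → S ⊆ F → X ∈ F}

section WModel

variable {Ω A : Type*} {U : A → Type*}

/-- The cylinder field `𝔘_{{b}}` on the decision coordinate of agent `b`. -/
def cylField (Ω : Type*) (U : A → Type*) (b : A) : Set (Set (Ω × ∀ c, U c)) :=
  {X | ∃ V : Set (U b), X = {h | h.2 b ∈ V}}

/-- The field `ℋ_B` of sets depending only on Nature and the decisions of agents in `B`. -/
def dependsOnField (Ω : Type*) (U : A → Type*) (B : Set A) : Set (Set (Ω × ∀ c, U c)) :=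
  {X | ∀ h h' : Ω × ∀ c, U c, h.1 = h'.1 → (∀ b ∈ B, h.2 b = h'.2 b) → h ∈ X → h' ∈ X}

variable [Fintype A]

/-- `H_κ^φ`: configurations whose ordering `φ h` restricted to the first `p.1` stages
equals the (partial) ordering `p`. -/
def Hset (φ : (Ω × ∀ c, U c) → Fin (Fintype.card A) → A) (p : Σ k : ℕ, Fin k → A) :
    Set (Ω × ∀ c, U c) :=
  {h | ∀ i : Fin p.1, ∃ hi : i.1 < Fintype.card A, p.2 i = φ h ⟨i.1, hi⟩}

/-- The range of the ordering `p` deprived of its last element. -/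
def predRange (p : Σ k : ℕ, Fin k → A) : Set A :=
  {b | ∃ i : Fin p.1, (i : ℕ) < p.1 - 1 ∧ p.2 i = b}

/-- Causality of a W-model with respect to the configuration-ordering `φ`. -/
def Causal (φ : (Ω × ∀ c, U c) → Fin (Fintype.card A) → A)
    (I : A → Set (Set (Ω × ∀ c, U c))) : Prop :=
  ∀ p : Σ k : ℕ, Fin k → A, Function.Injective p.2 →
    ∀ hpos : p.1 - 1 < p.1, ∀ X ∈ I (p.2 ⟨p.1 - 1, hpos⟩),
      Hset φ p ∩ X ∈ dependsOnField Ω U (predRange p)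

/-- Perfect recall of the player whose executive agents form the set `Ap`. -/
def PerfectRecall (φ : (Ω × ∀ c, U c) → Fin (Fintype.card A) → A)
    (I : A → Set (Set (Ω × ∀ c, U c))) (Ap : Set A) : Prop :=
  ∀ p : Σ k : ℕ, Fin k → A, Function.Injective p.2 →
    ∀ hpos : p.1 - 1 < p.1, p.2 ⟨p.1 - 1, hpos⟩ ∈ Ap →
      ∀ X ∈ genField (⋃ b ∈ predRange p ∩ Ap, cylField Ω U b ∪ I b),
        Hset φ p ∩ X ∈ I (p.2 ⟨p.1 - 1, hpos⟩)

end WModel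

section Atoms

variable {D : Type*} {F : Set (Set D)}

theorem field_empty (hF : IsSetField F) : ∅ ∈ F := by
  have := hF.2.1 _ hF.1
  simpa using this

theorem field_inter (hF : IsSetField F) {s t : Set D} (hs : s ∈ F) (ht : t ∈ F) :
    s ∩ t ∈ F := by
  have := hF.2.1 _ (hF.2.2 _ (hF.2.1 _ hs) _ (hF.2.1 _ ht))
  simpa [Set.compl_union] using this

theorem field_biUnion (hF : IsSetField F) {ι : Type*} (s : Finset ι) (g : ι → Set D)
    (hg : ∀ i ∈ s, g i ∈ F) : (⋃ i ∈ s, g i) ∈ F := by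
  classical
  induction s using Finset.induction_on with
  | empty => simpa using field_empty hF
  | insert a s' hni ih =>
      rw [Finset.set_biUnion_insert]
      exact hF.2.2 _ (hg a (Finset.mem_insert_self a s')) _
        (ih fun i hi => hg i (Finset.mem_insert_of_mem hi))

/-- The atom of the field `F` containing `h`. -/
def atomOf (F : Set (Set D)) (h : D) : Set D :=
  {h' | ∀ X ∈ F, h ∈ X → h' ∈ X}

theorem mem_atomOf_self (h : D) : h ∈ atomOf F h := fun _ _ hx => hx

theorem atomOf_subset {X : Set D} (hX : X ∈ F) {h : D} (hh : h ∈ X) :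
    atomOf F h ⊆ X := fun _ hh' => hh' X hX hh

theorem atomOf_symm (hF : IsSetField F) {h h' : D} (hh : h' ∈ atomOf F h) :
    h ∈ atomOf F h' := by
  intro X hX hh'X
  by_contra hc
  exact (hh _ (hF.2.1 _ hX) hc) hh'X

theorem atomOf_trans {h h' h'' : D} (h1 : h' ∈ atomOf F h) (h2 : h'' ∈ atomOf F h') :
    h'' ∈ atomOf F h := fun X hX hhX => h2 X hX (h1 X hX hhX)

theorem field_biInter (hF : IsSetField F) {ι : Type*} (s : Finset ι) (g : ι → Set D)
    (hg : ∀ i ∈ s, g i ∈ F) : (⋂ i ∈ s, g i) ∈ F := by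
  have : (⋂ i ∈ s, g i) = (⋃ i ∈ s, (g i)ᶜ)ᶜ := by
    simp [Set.compl_iUnion]
  rw [this]
  exact hF.2.1 _ (field_biUnion hF s _ fun i hi => hF.2.1 _ (hg i hi))

theorem atomOf_mem [Fintype D] (hF : IsSetField F) (h : D) : atomOf F h ∈ F := by
  classical
  have key : atomOf F h = ⋂ X ∈ {Y : Set D | Y ∈ F ∧ h ∈ Y}.toFinset, X := by
    ext h'
    simp only [atomOf, Set.mem_setOf_eq, Set.mem_iInter, Set.mem_toFinset]
    constructor
    · intro hA X ⟨h1, h2⟩; exact hA X h1 h2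
    · intro hA X h1 h2; exact hA X ⟨h1, h2⟩
  rw [key]
  exact field_biInter hF _ _ fun X hX => (Set.mem_toFinset.mp hX).1

theorem meas_congr {α : Type*} {f : D → α} (hf : Meas F f) {h h' : D}
    (hh : h' ∈ atomOf F h) : f h' = f h :=
  hh _ (hf (f h)) rfl

theorem meas_of_const_on_atoms [Fintype D] (hF : IsSetField F) {α : Type*} {f : D → α}
    (hf : ∀ h h', h' ∈ atomOf F h → f h' = f h) : Meas F f := by
  classical
  intro x
  have key : f ⁻¹' {x} = ⋃ h ∈ Finset.univ.filter (fun h : D => f h = x), atomOf F h := by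
    ext h'
    simp only [Set.mem_preimage, Set.mem_singleton_iff, Set.mem_iUnion, Finset.mem_filter,
      Finset.mem_univ, true_and]
    constructor
    · intro hx; exact ⟨h', hx, mem_atomOf_self h'⟩
    · rintro ⟨h, hx, hmem⟩; rw [hf h h' hmem]; exact hx
  rw [key]
  exact field_biUnion hF _ _ fun h _ => atomOf_mem hF h

/-- The setoid of atoms of a field. -/
def atomSetoid (F : Set (Set D)) (hF : IsSetField F) : Setoid D where
  r h h' := h' ∈ atomOf F h
  iseqv := ⟨mem_atomOf_self, fun hh => atomOf_symm hF hh, fun h1 h2 => atomOf_trans h1 h2⟩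

/-- Measurable maps are exactly maps on the quotient by atoms. -/
def measEquiv [Fintype D] (hF : IsSetField F) (α : Type*) :
    {f : D → α // Meas F f} ≃ (Quotient (atomSetoid F hF) → α) where
  toFun f := Quotient.lift f.1 (fun h h' hr => (meas_congr f.2 hr).symm)
  invFun g := ⟨fun h => g ⟦h⟧, meas_of_const_on_atoms hF (fun h h' hr =>
    congrArg g (Quotient.sound (atomOf_symm hF hr)))⟩
  left_inv f := by ext h; rfl
  right_inv g := by funext q; induction q using Quotient.ind; rfl

end Atoms


section KuhnAux

set_option linter.unusedSectionVars false

attribute [local instance] Classical.propDecidable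

variable {Ω A P : Type*} [Fintype Ω] [Fintype A] [Fintype P]
  {U : A → Type*} [∀ c, Fintype (U c)]
  {pl : A → P} {I : A → Set (Set (Ω × ∀ c, U c))}
  {φ : (Ω × ∀ c, U c) → Fin (Fintype.card A) → A}
  {p : P}

/-- index (time of play) of agent `a` in configuration `h`. -/
noncomputable def idx (hφ : ∀ h, Function.Bijective (φ h)) (h : Ω × ∀ c, U c) (a : A) : ℕ :=
  ((Equiv.ofBijective (φ h) (hφ h)).symm a : ℕ)

theorem idx_lt (hφ : ∀ h, Function.Bijective (φ h)) (h : Ω × ∀ c, U c) (a : A) :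
    idx hφ h a < Fintype.card A :=
  ((Equiv.ofBijective (φ h) (hφ h)).symm a).2

theorem phi_idx (hφ : ∀ h, Function.Bijective (φ h)) (h : Ω × ∀ c, U c) (a : A) :
    φ h ⟨idx hφ h a, idx_lt hφ h a⟩ = a := by
  have := (Equiv.ofBijective (φ h) (hφ h)).apply_symm_apply a
  simpa [idx, Equiv.ofBijective] using this

theorem idx_phi (hφ : ∀ h, Function.Bijective (φ h)) (h : Ω × ∀ c, U c)
    {k : ℕ} (hk : k < Fintype.card A) : idx hφ h (φ h ⟨k, hk⟩) = k := by
  have := (Equiv.ofBijective (φ h) (hφ h)).symm_apply_apply ⟨k, hk⟩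
  simp only [idx]
  rw [show φ h ⟨k, hk⟩ = Equiv.ofBijective (φ h) (hφ h) ⟨k, hk⟩ from rfl, this]

theorem idx_eq_of_phi (hφ : ∀ h, Function.Bijective (φ h)) (h : Ω × ∀ c, U c) {a : A}
    {k : ℕ} (hk : k < Fintype.card A) (ha : φ h ⟨k, hk⟩ = a) : idx hφ h a = k := by
  rw [← ha, idx_phi]

/-- The prefix-sequence of the play-order of `h` up to (and including) agent `a`. -/
noncomputable def pref (hφ : ∀ h, Function.Bijective (φ h)) (h : Ω × ∀ c, U c) (a : A) :
    Σ k : ℕ, Fin k → A :=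
  ⟨idx hφ h a + 1, fun i => φ h ⟨i.1, lt_of_lt_of_le i.2 (idx_lt hφ h a)⟩⟩

theorem pref_inj (hφ : ∀ h, Function.Bijective (φ h)) (h : Ω × ∀ c, U c) (a : A) :
    Function.Injective (pref hφ h a).2 := by
  intro i j hij
  have h1 := (hφ h).1 hij
  have h2 := congrArg Fin.val h1
  exact Fin.ext h2

theorem pref_pos (hφ : ∀ h, Function.Bijective (φ h)) (h : Ω × ∀ c, U c) (a : A) :
    (pref hφ h a).1 - 1 < (pref hφ h a).1 := by
  simp [pref]

theorem pref_last (hφ : ∀ h, Function.Bijective (φ h)) (h : Ω × ∀ c, U c) (a : A) :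
    (pref hφ h a).2 ⟨(pref hφ h a).1 - 1, pref_pos hφ h a⟩ = a := by
  exact phi_idx hφ h a

theorem mem_Hset_pref (hφ : ∀ h, Function.Bijective (φ h)) (h : Ω × ∀ c, U c) (a : A) :
    h ∈ Hset φ (pref hφ h a) :=
  fun i => ⟨lt_of_lt_of_le i.2 (idx_lt hφ h a), rfl⟩

theorem univ_mem_genField {D : Type*} (S : Set (Set D)) : Set.univ ∈ genField S :=
  fun _ hF _ => hF.1

theorem base_mem_genField {D : Type*} {S : Set (Set D)} {X : Set D} (hX : X ∈ S) :
    X ∈ genField S := fun _ _ hS => hS hX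

/-- Perfect-recall consequences: within the `I a`-atom of `h`, the order of play up to `a`,
the decisions of earlier agents of player `p`, and the values of all `I b`-measurable maps
for earlier agents `b` of player `p`, are all constant. -/
theorem atom_conseq (hφ : ∀ h, Function.Bijective (φ h))
    (hpr : PerfectRecall φ I {a : A | pl a = p})
    {h h' : Ω × ∀ c, U c} {a : A} (ha : pl a = p) (hmem : h' ∈ atomOf (I a) h) :
    (∀ i : ℕ, ∀ hi : i ≤ idx hφ h a, ∀ hi', φ h' ⟨i, hi'⟩ = φ h ⟨i, hi'⟩) ∧
    (∀ b : A, pl b = p → idx hφ h b < idx hφ h a → h'.2 b = h.2 b) ∧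
    (∀ b : A, pl b = p → idx hφ h b < idx hφ h a →
      ∀ f : (Ω × ∀ c, U c) → U b, Meas (I b) f → f h' = f h) := by
  have hPR : ∀ X ∈ genField (⋃ b ∈ predRange (pref hφ h a) ∩ {a : A | pl a = p},
      cylField Ω U b ∪ I b), h ∈ X → h' ∈ X := by
    intro X hX hhX
    have := hpr (pref hφ h a) (pref_inj hφ h a) (pref_pos hφ h a)
      (by rw [pref_last]; exact ha) X hX
    rw [pref_last] at this
    exact (atomOf_subset this ⟨mem_Hset_pref hφ h a, hhX⟩ hmem).2
  have hpredmem : ∀ b : A, pl b = p → idx hφ h b < idx hφ h a →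
      b ∈ predRange (pref hφ h a) ∩ {a : A | pl a = p} := by
    intro b hb hlt
    refine ⟨⟨⟨idx hφ h b, Nat.lt_succ_of_lt hlt⟩, ?_, phi_idx hφ h b⟩, hb⟩
    show idx hφ h b < idx hφ h a + 1 - 1
    omega
  refine ⟨?_, ?_, ?_⟩
  · -- order of play
    have hHset : h' ∈ Hset φ (pref hφ h a) := by
      have := hpr (pref hφ h a) (pref_inj hφ h a) (pref_pos hφ h a)
        (by rw [pref_last]; exact ha) Set.univ (univ_mem_genField _)
      rw [pref_last, Set.inter_univ] at this
      exact atomOf_subset this (mem_Hset_pref hφ h a) hmem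
    intro i hi hi'
    obtain ⟨hj, heq⟩ := hHset ⟨i, by simp only [pref]; omega⟩
    have : φ h ⟨i, hi'⟩ = φ h' ⟨i, hj⟩ := heq
    rw [this]
  · -- decisions of earlier p-agents
    intro b hb hlt
    have hX : {h'' : Ω × ∀ c, U c | h''.2 b ∈ ({h.2 b} : Set (U b))} ∈
        genField (⋃ b ∈ predRange (pref hφ h a) ∩ {a : A | pl a = p},
          cylField Ω U b ∪ I b) := by
      apply base_mem_genField
      exact Set.mem_biUnion (hpredmem b hb hlt) (Or.inl ⟨{h.2 b}, rfl⟩)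
    exact hPR _ hX rfl
  · -- measurable functions of earlier p-agents
    intro b hb hlt f hf
    have hX : f ⁻¹' {f h} ∈
        genField (⋃ b ∈ predRange (pref hφ h a) ∩ {a : A | pl a = p},
          cylField Ω U b ∪ I b) := by
      apply base_mem_genField
      exact Set.mem_biUnion (hpredmem b hb hlt) (Or.inr (hf (f h)))
    exact hPR _ hX rfl

/-- total mass of a set under a weight function -/
noncomputable def mass {X : Type*} [Fintype X] (μ : X → ℝ) (S : Set X) : ℝ :=
  ∑ x, if x ∈ S then μ x else 0

theorem mass_nonneg {X : Type*} [Fintype X] {μ : X → ℝ} (hμ : ∀ x, 0 ≤ μ x) (S : Set X) :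
    0 ≤ mass μ S :=
  Finset.sum_nonneg fun x _ => by by_cases h : x ∈ S <;> simp [mass, h, hμ x]

theorem mass_mono {X : Type*} [Fintype X] {μ : X → ℝ} (hμ : ∀ x, 0 ≤ μ x) {S T : Set X}
    (hST : S ⊆ T) : mass μ S ≤ mass μ T := by
  apply Finset.sum_le_sum
  intro x _
  by_cases h : x ∈ S
  · simp [h, hST h]
  · by_cases h' : x ∈ T <;> simp [h, h', hμ x]

theorem mass_eq_zero {X : Type*} [Fintype X] {μ : X → ℝ} (hμ : ∀ x, 0 ≤ μ x) {S T : Set X}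
    (hST : S ⊆ T) (hT : mass μ T = 0) : mass μ S = 0 :=
  le_antisymm (hT ▸ mass_mono hμ hST) (mass_nonneg hμ S)

theorem mass_univ {X : Type*} [Fintype X] (μ : X → ℝ) : mass μ Set.univ = ∑ x, μ x := by
  simp [mass]

section Events

variable (pl) (I) (p)

/-- Event: `lamP` fixes the decisions at `h` of all agents of player `p` playing before
time `k`. -/
def Tset (hφ : ∀ h, Function.Bijective (φ h)) (h : Ω × ∀ c, U c) (k : ℕ) :
    Set (∀ a : {a : A // pl a = p}, {f : (Ω × ∀ c, U c) → U a.1 // Meas (I a.1) f}) :=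
  {lamP | ∀ b : {a : A // pl a = p}, idx hφ h b.1 < k → (lamP b).1 h = h.2 b.1}

/-- The behavior probability of agent `a` choosing `v` given the information at `h`. -/
noncomputable def beta (hφ : ∀ h, Function.Bijective (φ h))
    (μp : (∀ a : {a : A // pl a = p}, {f : (Ω × ∀ c, U c) → U a.1 // Meas (I a.1) f}) → ℝ)
    (h : Ω × ∀ c, U c) (a : {a : A // pl a = p}) (v : U a.1) : ℝ :=
  if mass μp (Tset pl I p hφ h (idx hφ h a.1)) = 0 then (Fintype.card (U a.1) : ℝ)⁻¹
  else mass μp ({lamP | (lamP a).1 h = v} ∩ Tset pl I p hφ h (idx hφ h a.1)) /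
    mass μp (Tset pl I p hφ h (idx hφ h a.1))

theorem beta_nonneg (hφ : ∀ h, Function.Bijective (φ h))
    {μp : (∀ a : {a : A // pl a = p}, {f : (Ω × ∀ c, U c) → U a.1 // Meas (I a.1) f}) → ℝ}
    (hμ : ∀ x, 0 ≤ μp x) (h : Ω × ∀ c, U c) (a : {a : A // pl a = p}) (v : U a.1) :
    0 ≤ beta pl I p hφ μp h a v := by
  unfold beta
  split
  · positivity
  · exact div_nonneg (mass_nonneg hμ _) (mass_nonneg hμ _)

theorem sum_mass_ev (μp : (∀ a : {a : A // pl a = p}, {f : (Ω × ∀ c, U c) → U a.1 // Meas (I a.1) f}) → ℝ)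
    (h : Ω × ∀ c, U c) (a : {a : A // pl a = p}) (S : Set _) :
    ∑ v : U a.1, mass μp ({lamP | (lamP a).1 h = v} ∩ S) = mass μp S := by
  unfold mass
  rw [Finset.sum_comm]
  apply Finset.sum_congr rfl
  intro lamP _
  by_cases hS : lamP ∈ S
  · rw [Finset.sum_eq_single ((lamP a).1 h)]
    · simp [hS]
    · intro v _ hv
      simp [Set.mem_inter_iff, Set.mem_setOf_eq]
      intro hc; exact absurd hc.symm hv
    · simp
  · simp [hS, Set.mem_inter_iff]

theorem beta_sum_one (hφ : ∀ h, Function.Bijective (φ h))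
    {μp : (∀ a : {a : A // pl a = p}, {f : (Ω × ∀ c, U c) → U a.1 // Meas (I a.1) f}) → ℝ}
    (h : Ω × ∀ c, U c) (a : {a : A // pl a = p}) :
    ∑ v : U a.1, beta pl I p hφ μp h a v = 1 := by
  have hne : Nonempty (U a.1) := ⟨h.2 a.1⟩
  unfold beta
  by_cases h0 : mass μp (Tset pl I p hφ h (idx hφ h a.1)) = 0
  · simp only [h0, if_true]
    rw [Finset.sum_const, Finset.card_univ, nsmul_eq_mul]
    rw [mul_inv_cancel₀]
    exact Nat.cast_ne_zero.mpr Fintype.card_ne_zero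
  · simp only [h0, if_false]
    rw [← Finset.sum_div, sum_mass_ev pl I p μp h a, div_self h0]

theorem chain_rule (hφ : ∀ h, Function.Bijective (φ h))
    {μp : (∀ a : {a : A // pl a = p}, {f : (Ω × ∀ c, U c) → U a.1 // Meas (I a.1) f}) → ℝ}
    (hμ1 : ∀ x, 0 ≤ μp x) (hμ2 : ∑ x, μp x = 1) (h : Ω × ∀ c, U c) :
    ∀ k, k ≤ Fintype.card A →
      mass μp (Tset pl I p hφ h k) =
        ∏ b ∈ Finset.univ.filter (fun b : {a : A // pl a = p} => idx hφ h b.1 < k),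
          beta pl I p hφ μp h b (h.2 b.1) := by
  intro k
  induction k with
  | zero =>
      intro _
      have h1 : Tset pl I p hφ h 0 = Set.univ := by
        ext lamP; simp [Tset]
      have h2 : Finset.univ.filter (fun b : {a : A // pl a = p} => idx hφ h b.1 < 0) = ∅ := by
        ext b; simp
      rw [h1, h2, mass_univ, hμ2, Finset.prod_empty]
  | succ k ih =>
      intro hk1
      have hk : k < Fintype.card A := hk1
      have ihk := ih (le_of_lt hk)
      have hidxc : idx hφ h (φ h ⟨k, hk⟩) = k := idx_phi hφ h hk
      have hlt_iff : ∀ b : {a : A // pl a = p},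
          idx hφ h b.1 < k + 1 ↔ (idx hφ h b.1 < k ∨ b.1 = φ h ⟨k, hk⟩) := by
        intro b
        constructor
        · intro hb
          rcases Nat.lt_succ_iff_lt_or_eq.mp hb with h1 | h1
          · exact Or.inl h1
          · right
            rw [← phi_idx hφ h b.1]
            congr 1
            exact Fin.ext h1
        · rintro (h1 | h1)
          · exact Nat.lt_succ_of_lt h1
          · rw [h1, hidxc]; exact Nat.lt_succ_self k
      by_cases hcp : pl (φ h ⟨k, hk⟩) = p
      · -- the agent playing at time k belongs to player p
        have hTeq : Tset pl I p hφ h (k+1) =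
            {lamP : ∀ a : {a : A // pl a = p}, {f : (Ω × ∀ c, U c) → U a.1 // Meas (I a.1) f} |
              (lamP ⟨φ h ⟨k, hk⟩, hcp⟩).1 h = h.2 (φ h ⟨k, hk⟩)} ∩ Tset pl I p hφ h k := by
          ext lamP
          simp only [Tset, Set.mem_setOf_eq, Set.mem_inter_iff]
          constructor
          · intro hT
            refine ⟨hT ⟨φ h ⟨k, hk⟩, hcp⟩ ?_, fun b hb => hT b (Nat.lt_succ_of_lt hb)⟩
            show idx hφ h (φ h ⟨k, hk⟩) < k + 1
            rw [hidxc]; exact Nat.lt_succ_self k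
          · rintro ⟨h1, h2⟩ b hb
            rcases (hlt_iff b).mp hb with hb' | hb'
            · exact h2 b hb'
            · have hbc : b = ⟨φ h ⟨k, hk⟩, hcp⟩ := Subtype.ext hb'
              rw [hbc]
              exact h1
        have hfilter : Finset.univ.filter
              (fun b : {a : A // pl a = p} => idx hφ h b.1 < k + 1) =
            insert ⟨φ h ⟨k, hk⟩, hcp⟩ (Finset.univ.filter
              (fun b : {a : A // pl a = p} => idx hφ h b.1 < k)) := by
          ext b
          simp only [Finset.mem_filter, Finset.mem_univ, true_and, Finset.mem_insert,
            hlt_iff b]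
          rw [Subtype.ext_iff]
          tauto
        have hnotmem : (⟨φ h ⟨k, hk⟩, hcp⟩ : {a : A // pl a = p}) ∉
            Finset.univ.filter (fun b : {a : A // pl a = p} => idx hφ h b.1 < k) := by
          simp only [Finset.mem_filter, Finset.mem_univ, true_and]
          rw [hidxc]
          omega
        rw [hTeq, hfilter, Finset.prod_insert hnotmem, ← ihk]
        have hbeta : beta pl I p hφ μp h ⟨φ h ⟨k, hk⟩, hcp⟩
            (h.2 ((⟨φ h ⟨k, hk⟩, hcp⟩ : {a : A // pl a = p}) : A)) =
            (if mass μp (Tset pl I p hφ h k) = 0 then (Fintype.card (U (φ h ⟨k, hk⟩)) : ℝ)⁻¹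
            else mass μp ({lamP | (lamP ⟨φ h ⟨k, hk⟩, hcp⟩).1 h = h.2 (φ h ⟨k, hk⟩)} ∩
              Tset pl I p hφ h k) / mass μp (Tset pl I p hφ h k)) := by
          unfold beta
          rw [hidxc]
        rw [hbeta]
        by_cases h0 : mass μp (Tset pl I p hφ h k) = 0
        · rw [h0, if_pos rfl, mul_zero]
          exact mass_eq_zero hμ1 Set.inter_subset_right h0
        · rw [if_neg h0, div_mul_cancel₀ _ h0]
      · -- the agent playing at time k belongs to another player
        have hTeq : Tset pl I p hφ h (k+1) = Tset pl I p hφ h k := by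
          ext lamP
          simp only [Tset, Set.mem_setOf_eq]
          constructor
          · intro hT b hb; exact hT b (Nat.lt_succ_of_lt hb)
          · intro hT b hb
            rcases (hlt_iff b).mp hb with hb' | hb'
            · exact hT b hb'
            · exact absurd (hb' ▸ b.2) hcp
        have hfilter : Finset.univ.filter
              (fun b : {a : A // pl a = p} => idx hφ h b.1 < k + 1) =
            Finset.univ.filter (fun b : {a : A // pl a = p} => idx hφ h b.1 < k) := by
          ext b
          simp only [Finset.mem_filter, Finset.mem_univ, true_and, hlt_iff b]
          constructor
          · rintro (h1 | h1)
            · exact h1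
            · exact absurd (h1 ▸ b.2) hcp
          · exact Or.inl
        rw [hTeq, hfilter, ihk]

/-- Within the atom of `h` for agent `a`'s information, the index of `a` and all the data
entering the definition of `beta` are constant. -/
theorem Tset_atom (hφ : ∀ h, Function.Bijective (φ h)) (hI : ∀ c, IsSetField (I c))
    (hpr : PerfectRecall φ I {a : A | pl a = p})
    {h h' : Ω × ∀ c, U c} {a : {a : A // pl a = p}} (hmem : h' ∈ atomOf (I a.1) h) :
    idx hφ h' a.1 = idx hφ h a.1 ∧
    Tset pl I p hφ h (idx hφ h a.1) = Tset pl I p hφ h' (idx hφ h a.1) := by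
  obtain ⟨cφ, cu, cf⟩ := atom_conseq hφ hpr a.2 hmem
  have hmem' : h ∈ atomOf (I a.1) h' := atomOf_symm (hI a.1) hmem
  have hidx : idx hφ h' a.1 = idx hφ h a.1 := by
    apply idx_eq_of_phi hφ h' (idx_lt hφ h a.1)
    rw [cφ _ (le_refl _) (idx_lt hφ h a.1)]
    exact phi_idx hφ h a.1
  obtain ⟨cφ', cu', cf'⟩ := atom_conseq hφ hpr a.2 hmem'
  rw [hidx] at cφ' cu' cf'
  refine ⟨hidx, ?_⟩
  ext lamP
  simp only [Tset, Set.mem_setOf_eq]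
  constructor
  · intro hT b hb
    have hbidx : idx hφ h b.1 = idx hφ h' b.1 := by
      apply idx_eq_of_phi hφ h (idx_lt hφ h' b.1)
      rw [← cφ _ (le_of_lt hb) (idx_lt hφ h' b.1)]
      exact phi_idx hφ h' b.1
    have hlt : idx hφ h b.1 < idx hφ h a.1 := by rw [hbidx]; exact hb
    rw [cf b.1 b.2 hlt (lamP b).1 (lamP b).2, cu b.1 b.2 hlt]
    exact hT b hlt
  · intro hT b hb
    have hbidx : idx hφ h' b.1 = idx hφ h b.1 := by
      apply idx_eq_of_phi hφ h' (idx_lt hφ h b.1)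
      rw [cφ _ (le_of_lt hb) (idx_lt hφ h b.1)]
      exact phi_idx hφ h b.1
    have hlt : idx hφ h' b.1 < idx hφ h a.1 := by rw [hbidx]; exact hb
    rw [cf' b.1 b.2 hlt (lamP b).1 (lamP b).2, cu' b.1 b.2 hlt]
    exact hT b hlt

theorem beta_atom (hφ : ∀ h, Function.Bijective (φ h)) (hI : ∀ c, IsSetField (I c))
    (hpr : PerfectRecall φ I {a : A | pl a = p})
    {μp : (∀ a : {a : A // pl a = p}, {f : (Ω × ∀ c, U c) → U a.1 // Meas (I a.1) f}) → ℝ}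
    {h h' : Ω × ∀ c, U c} {a : {a : A // pl a = p}} (hmem : h' ∈ atomOf (I a.1) h)
    (v : U a.1) : beta pl I p hφ μp h a v = beta pl I p hφ μp h' a v := by
  obtain ⟨hidx, hT⟩ := Tset_atom pl I p hφ hI hpr hmem
  have hEv : {lamP : ∀ a : {a : A // pl a = p},
        {f : (Ω × ∀ c, U c) → U a.1 // Meas (I a.1) f} | (lamP a).1 h = v} =
      {lamP | (lamP a).1 h' = v} := by
    ext lamP
    simp only [Set.mem_setOf_eq]
    rw [meas_congr (lamP a).2 hmem]
  unfold beta
  rw [hidx, ← hT, ← hEv]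

section PiStrat

variable (hφ : ∀ h, Function.Bijective (φ h)) (hI : ∀ c, IsSetField (I c))
  (μp : (∀ a : {a : A // pl a = p}, {f : (Ω × ∀ c, U c) → U a.1 // Meas (I a.1) f}) → ℝ)

/-- The product-mixed (behavioral) strategy of agent `a` derived from `μp`: choose
independently on each information atom according to `beta`. -/
noncomputable def piAg (a : {a : A // pl a = p})
    (f : {f : (Ω × ∀ c, U c) → U a.1 // Meas (I a.1) f}) : ℝ :=
  ∏ q : Quotient (atomSetoid (I a.1) (hI a.1)), beta pl I p hφ μp q.out a (f.1 q.out)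

theorem piAg_nonneg (hμ1 : ∀ x, 0 ≤ μp x) (a : {a : A // pl a = p})
    (f : {f : (Ω × ∀ c, U c) → U a.1 // Meas (I a.1) f}) :
    0 ≤ piAg pl I p hφ hI μp a f :=
  Finset.prod_nonneg fun q _ => beta_nonneg pl I p hφ hμ1 q.out a _

theorem piAg_sum_one (a : {a : A // pl a = p}) :
    ∑ f : {f : (Ω × ∀ c, U c) → U a.1 // Meas (I a.1) f}, piAg pl I p hφ hI μp a f = 1 := by
  classical
  rw [← Equiv.sum_comp (measEquiv (hI a.1) (U a.1)).symm (piAg pl I p hφ hI μp a)]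
  have step : ∀ g : Quotient (atomSetoid (I a.1) (hI a.1)) → U a.1,
      piAg pl I p hφ hI μp a ((measEquiv (hI a.1) (U a.1)).symm g) =
      ∏ q : Quotient (atomSetoid (I a.1) (hI a.1)), beta pl I p hφ μp q.out a (g q) := by
    intro g
    unfold piAg
    apply Finset.prod_congr rfl
    intro q _
    congr 1
    exact congrArg g (Quotient.out_eq q)
  simp only [step]
  have key := Fintype.prod_sum (fun (q : Quotient (atomSetoid (I a.1) (hI a.1)))
    (w : U a.1) => beta pl I p hφ μp q.out a w)
  rw [← key]
  rw [Finset.prod_eq_one]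
  intro q _
  exact beta_sum_one pl I p hφ q.out a

theorem piAg_marginal (hpr : PerfectRecall φ I {a : A | pl a = p})
    (h : Ω × ∀ c, U c) (a : {a : A // pl a = p}) (v : U a.1) :
    ∑ f : {f : (Ω × ∀ c, U c) → U a.1 // Meas (I a.1) f},
      piAg pl I p hφ hI μp a f * (if f.1 h = v then (1:ℝ) else 0) =
    beta pl I p hφ μp h a v := by
  classical
  set Q := Quotient (atomSetoid (I a.1) (hI a.1)) with hQ
  set q0 : Q := Quotient.mk (atomSetoid (I a.1) (hI a.1)) h with hq0
  set G : Q → U a.1 → ℝ := fun q w =>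
    if q = q0 then (if w = v then beta pl I p hφ μp q.out a w else 0)
    else beta pl I p hφ μp q.out a w with hG
  rw [← Equiv.sum_comp (measEquiv (hI a.1) (U a.1)).symm
    (fun f => piAg pl I p hφ hI μp a f * (if f.1 h = v then (1:ℝ) else 0))]
  have step : ∀ g : Q → U a.1,
      piAg pl I p hφ hI μp a ((measEquiv (hI a.1) (U a.1)).symm g) *
        (if ((measEquiv (hI a.1) (U a.1)).symm g).1 h = v then (1:ℝ) else 0) =
      ∏ q : Q, G q (g q) := by
    intro g
    have hpi : piAg pl I p hφ hI μp a ((measEquiv (hI a.1) (U a.1)).symm g) =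
        ∏ q : Q, beta pl I p hφ μp q.out a (g q) := by
      unfold piAg
      apply Finset.prod_congr rfl
      intro q _
      congr 1
      exact congrArg g (Quotient.out_eq q)
    have hcoord : ((measEquiv (hI a.1) (U a.1)).symm g).1 h = g q0 := rfl
    rw [hpi, hcoord]
    by_cases hv : g q0 = v
    · rw [if_pos hv, mul_one]
      symm
      apply Finset.prod_congr rfl
      intro q _
      by_cases hq : q = q0
      · have h1 : G q (g q) = G q0 (g q0) := by rw [hq]
        have h2 : G q0 (g q0) = if g q0 = v then beta pl I p hφ μp q0.out a (g q0) else 0 := by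
          simp only [hG, if_pos rfl]
        rw [h1, h2, if_pos hv, hq]
      · simp only [hG, if_neg hq]
    · rw [if_neg hv, mul_zero]
      symm
      apply Finset.prod_eq_zero (Finset.mem_univ q0)
      simp only [hG, if_pos rfl, if_neg hv]
  simp only [step]
  have key := Fintype.prod_sum G
  rw [← key]
  have hsum : ∀ q : Q, ∑ w : U a.1, G q w =
      if q = q0 then beta pl I p hφ μp q0.out a v else 1 := by
    intro q
    by_cases hq : q = q0
    · rw [if_pos hq, hq]
      have h2 : ∀ w, G q0 w = if w = v then beta pl I p hφ μp q0.out a w else 0 := by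
        intro w; simp only [hG, if_pos rfl]
      simp only [h2]
      rw [Finset.sum_ite_eq' Finset.univ v (fun w => beta pl I p hφ μp q0.out a w)]
      simp
    · rw [if_neg hq]
      have h2 : ∀ w, G q w = beta pl I p hφ μp q.out a w := by
        intro w; simp only [hG, if_neg hq]
      simp only [h2]
      exact beta_sum_one pl I p hφ q.out a
  simp only [hsum]
  rw [Finset.prod_ite_eq' Finset.univ q0
    (fun _ => beta pl I p hφ μp q0.out a v)]
  simp only [Finset.mem_univ, if_pos]
  -- finally, `beta` is constant on the atom of `h`
  have hrel : q0.out ∈ atomOf (I a.1) h := by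
    have : h ∈ atomOf (I a.1) q0.out := Quotient.exact (Quotient.out_eq q0)
    exact atomOf_symm (hI a.1) this
  exact (beta_atom pl I p hφ hI hpr hrel v).symm

/-- Kuhn's key identity: for any configuration `h`, the probability that a mixed strategy
fixes `h` equals the probability that the derived product-mixed strategy fixes `h`. -/
theorem kuhn_main (hpr : PerfectRecall φ I {a : A | pl a = p})
    (hμ1 : ∀ x, 0 ≤ μp x) (hμ2 : ∑ x, μp x = 1) (h : Ω × ∀ c, U c) :
    ∑ lamP : ∀ a : {a : A // pl a = p}, {f : (Ω × ∀ c, U c) → U a.1 // Meas (I a.1) f},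
      μp lamP * ∏ a : {a : A // pl a = p}, (if (lamP a).1 h = h.2 a.1 then (1:ℝ) else 0) =
    ∑ lamP : ∀ a : {a : A // pl a = p}, {f : (Ω × ∀ c, U c) → U a.1 // Meas (I a.1) f},
      (∏ a : {a : A // pl a = p}, piAg pl I p hφ hI μp a (lamP a)) *
        ∏ a : {a : A // pl a = p}, (if (lamP a).1 h = h.2 a.1 then (1:ℝ) else 0) := by
  classical
  have hfull : Finset.univ.filter
      (fun b : {a : A // pl a = p} => idx hφ h b.1 < Fintype.card A) = Finset.univ := by
    ext b; simp [idx_lt hφ h b.1]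
  -- LHS equals the mass of the full fixing event, which the chain rule computes
  have lhs_eq : ∑ lamP : ∀ a : {a : A // pl a = p},
        {f : (Ω × ∀ c, U c) → U a.1 // Meas (I a.1) f},
      μp lamP * ∏ a : {a : A // pl a = p}, (if (lamP a).1 h = h.2 a.1 then (1:ℝ) else 0) =
      mass μp (Tset pl I p hφ h (Fintype.card A)) := by
    unfold mass
    apply Finset.sum_congr rfl
    intro lamP _
    rw [Finset.prod_boole]
    by_cases hT : lamP ∈ Tset pl I p hφ h (Fintype.card A)
    · rw [if_pos hT, if_pos, mul_one]
      intro a _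
      exact hT a (idx_lt hφ h a.1)
    · rw [if_neg hT, if_neg, mul_zero]
      intro hcon
      exact hT (fun b _ => hcon b (Finset.mem_univ b))
  rw [lhs_eq, chain_rule pl I p hφ hμ1 hμ2 h (Fintype.card A) (le_refl _), hfull]
  -- RHS factorizes into the product of the marginals
  have rhs_eq : ∑ lamP : ∀ a : {a : A // pl a = p},
        {f : (Ω × ∀ c, U c) → U a.1 // Meas (I a.1) f},
      (∏ a : {a : A // pl a = p}, piAg pl I p hφ hI μp a (lamP a)) *
        ∏ a : {a : A // pl a = p}, (if (lamP a).1 h = h.2 a.1 then (1:ℝ) else 0) =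
      ∏ a : {a : A // pl a = p},
        ∑ f : {f : (Ω × ∀ c, U c) → U a.1 // Meas (I a.1) f},
          piAg pl I p hφ hI μp a f * (if f.1 h = h.2 a.1 then (1:ℝ) else 0) := by
    have key := Fintype.prod_sum (fun (a : {a : A // pl a = p})
      (f : {f : (Ω × ∀ c, U c) → U a.1 // Meas (I a.1) f}) =>
        piAg pl I p hφ hI μp a f * (if f.1 h = h.2 a.1 then (1:ℝ) else 0))
    rw [key]
    apply Finset.sum_congr rfl
    intro lamP _
    rw [← Finset.prod_mul_distrib]
  rw [rhs_eq]
  apply Finset.prod_congr rfl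
  intro a _
  exact (piAg_marginal pl I p hφ hI μp hpr h a (h.2 a.1)).symm

end PiStrat

end Events

end KuhnAux

theorem kuhn_equivalence_for_W_games_aux
    {Ω A P : Type*} [Fintype Ω] [Fintype A] [Fintype P]
    {U : A → Type*} [∀ c, Fintype (U c)]
    (pl : A → P)
    (I : A → Set (Set (Ω × ∀ c, U c))) (hI : ∀ c, IsSetField (I c))
    (φ : (Ω × ∀ c, U c) → Fin (Fintype.card A) → A)
    (hφ : ∀ h, Function.Bijective (φ h))
    (p : P) (hpr : PerfectRecall φ I {a : A | pl a = p})
    (M : (∀ a : A, {f : (Ω × ∀ c, U c) → U a // Meas (I a) f}) → Ω → ∀ a, U a)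
    (hM : ∀ lam ω, ∀ a : A, (lam a).1 (ω, M lam ω) = M lam ω a)
    (hMuniq : ∀ lam ω (u : ∀ a, U a), (∀ a : A, (lam a).1 (ω, u) = u a) → u = M lam ω)
    (μp : (∀ a : {a : A // pl a = p},
        {f : (Ω × ∀ c, U c) → U a.1 // Meas (I a.1) f}) → ℝ)
    (hμp : (∀ x, 0 ≤ μp x) ∧ ∑ x, μp x = 1) :
    ∃ π : ∀ a : {a : A // pl a = p},
        ({f : (Ω × ∀ c, U c) → U a.1 // Meas (I a.1) f} → ℝ),
      (∀ a, (∀ x, 0 ≤ π a x) ∧ ∑ x, π a x = 1) ∧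
      ∀ μo : ∀ q : {q : P // q ≠ p},
          ((∀ a : {a : A // pl a = q.1},
            {f : (Ω × ∀ c, U c) → U a.1 // Meas (I a.1) f}) → ℝ),
        (∀ q, (∀ x, 0 ≤ μo q x) ∧ ∑ x, μo q x = 1) →
        ∀ (ω : Ω) (u : ∀ a, U a),
          (∑ lam : ∀ a : A, {f : (Ω × ∀ c, U c) → U a // Meas (I a) f},
            if M lam ω = u then
              μp (fun a => lam a.1) *
                ∏ q : {q : P // q ≠ p}, μo q (fun a => lam a.1)
            else 0)
          =
          (∑ lam : ∀ a : A, {f : (Ω × ∀ c, U c) → U a // Meas (I a) f},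
            if M lam ω = u then
              (∏ a : {a : A // pl a = p}, π a (lam a.1)) *
                ∏ q : {q : P // q ≠ p}, μo q (fun a => lam a.1)
            else 0) := by
  classical
  refine ⟨fun a => piAg pl I p hφ hI μp a,
    fun a => ⟨piAg_nonneg pl I p hφ hI μp hμp.1 a, piAg_sum_one pl I p hφ hI μp a⟩, ?_⟩
  intro μo hμo ω u
  have hMchar : ∀ lam : ∀ a : A, {f : (Ω × ∀ c, U c) → U a // Meas (I a) f},
      (M lam ω = u) ↔ (∀ a : A, (lam a).1 (ω, u) = u a) := by
    intro lam
    constructor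
    · intro hMe a
      have := hM lam ω a
      rw [hMe] at this
      exact this
    · intro hfix
      exact (hMuniq lam ω u hfix).symm
  have hif : ∀ (lam : ∀ a : A, {f : (Ω × ∀ c, U c) → U a // Meas (I a) f}) (X : ℝ),
      (if M lam ω = u then X else 0) =
      (∏ a : A, if (lam a).1 (ω, u) = u a then (1:ℝ) else 0) * X := by
    intro lam X
    rw [Finset.prod_boole]
    by_cases hMe : M lam ω = u
    · rw [if_pos hMe, if_pos, one_mul]
      intro a _
      exact (hMchar lam).mp hMe a
    · rw [if_neg hMe, if_neg, zero_mul]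
      intro hcon
      exact hMe ((hMchar lam).mpr fun a => hcon a (Finset.mem_univ a))
  simp only [hif]
  -- split each side as a product of a `p`-part and an opponents part
  have split : ∀ W : (∀ a : {a : A // pl a = p},
        {f : (Ω × ∀ c, U c) → U a.1 // Meas (I a.1) f}) → ℝ,
      (∑ lam : ∀ a : A, {f : (Ω × ∀ c, U c) → U a // Meas (I a) f},
        (∏ a : A, if (lam a).1 (ω, u) = u a then (1:ℝ) else 0) *
          (W (fun a => lam a.1) * ∏ q : {q : P // q ≠ p}, μo q (fun a => lam a.1))) =
      (∑ lamP : ∀ a : {a : A // pl a = p},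
          {f : (Ω × ∀ c, U c) → U a.1 // Meas (I a.1) f},
        W lamP * ∏ a : {a : A // pl a = p},
          if (lamP a).1 (ω, u) = u a.1 then (1:ℝ) else 0) *
      (∑ lamO : ∀ a : {a : A // ¬ pl a = p},
          {f : (Ω × ∀ c, U c) → U a.1 // Meas (I a.1) f},
        (∏ a : {a : A // ¬ pl a = p}, if (lamO a).1 (ω, u) = u a.1 then (1:ℝ) else 0) *
          ∏ q : {q : P // q ≠ p},
            μo q (fun a => lamO ⟨a.1, fun hp => q.2 (a.2.symm.trans hp)⟩)) := by
    intro W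
    rw [Finset.sum_mul_sum]
    rw [← Equiv.sum_comp (Equiv.piEquivPiSubtypeProd (fun a : A => pl a = p)
      (fun a => {f : (Ω × ∀ c, U c) → U a // Meas (I a) f})).symm]
    rw [Fintype.sum_prod_type]
    apply Finset.sum_congr rfl
    intro lamP _
    apply Finset.sum_congr rfl
    intro lamO _
    have hA : ∀ a : {a : A // pl a = p},
        (Equiv.piEquivPiSubtypeProd (fun a : A => pl a = p)
          (fun a => {f : (Ω × ∀ c, U c) → U a // Meas (I a) f})).symm (lamP, lamO) a.1 =
        lamP a := by
      intro a
      rw [Equiv.piEquivPiSubtypeProd_symm_apply, dif_pos a.2]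
    have hB : ∀ a : {a : A // ¬ pl a = p},
        (Equiv.piEquivPiSubtypeProd (fun a : A => pl a = p)
          (fun a => {f : (Ω × ∀ c, U c) → U a // Meas (I a) f})).symm (lamP, lamO) a.1 =
        lamO a := by
      intro a
      rw [Equiv.piEquivPiSubtypeProd_symm_apply, dif_neg a.2]
    have h3 : (fun a : {a : A // pl a = p} =>
        (Equiv.piEquivPiSubtypeProd (fun a : A => pl a = p)
          (fun a => {f : (Ω × ∀ c, U c) → U a // Meas (I a) f})).symm (lamP, lamO) a.1) =
        lamP := funext fun a => hA a
    have hC : ∀ q : {q : P // q ≠ p},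
        (fun a : {a : A // pl a = q.1} =>
          (Equiv.piEquivPiSubtypeProd (fun a : A => pl a = p)
            (fun a => {f : (Ω × ∀ c, U c) → U a // Meas (I a) f})).symm (lamP, lamO) a.1) =
        (fun a : {a : A // pl a = q.1} =>
          lamO ⟨a.1, fun hp => q.2 (a.2.symm.trans hp)⟩) := by
      intro q
      funext a
      rw [Equiv.piEquivPiSubtypeProd_symm_apply, dif_neg (fun hp => q.2 (a.2.symm.trans hp))]
    have h4 : ∏ q : {q : P // q ≠ p},
        μo q (fun a => (Equiv.piEquivPiSubtypeProd (fun a : A => pl a = p)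
          (fun a => {f : (Ω × ∀ c, U c) → U a // Meas (I a) f})).symm (lamP, lamO) a.1) =
        ∏ q : {q : P // q ≠ p},
          μo q (fun a => lamO ⟨a.1, fun hp => q.2 (a.2.symm.trans hp)⟩) := by
      apply Finset.prod_congr rfl
      intro q _
      rw [hC q]
    rw [← Fintype.prod_subtype_mul_prod_subtype (fun a : A => pl a = p)
      (fun a => if ((Equiv.piEquivPiSubtypeProd (fun a : A => pl a = p)
        (fun a => {f : (Ω × ∀ c, U c) → U a // Meas (I a) f})).symm (lamP, lamO) a).1 (ω, u)
          = u a then (1:ℝ) else 0)]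
    have h1 : ∏ a : {a : A // pl a = p},
        (if ((Equiv.piEquivPiSubtypeProd (fun a : A => pl a = p)
          (fun a => {f : (Ω × ∀ c, U c) → U a // Meas (I a) f})).symm (lamP, lamO) a.1).1
            (ω, u) = u a.1 then (1:ℝ) else 0) =
        ∏ a : {a : A // pl a = p}, if (lamP a).1 (ω, u) = u a.1 then (1:ℝ) else 0 := by
      apply Finset.prod_congr rfl
      intro a _
      rw [hA a]
    have h2 : ∏ a : {a : A // ¬ pl a = p},
        (if ((Equiv.piEquivPiSubtypeProd (fun a : A => pl a = p)
          (fun a => {f : (Ω × ∀ c, U c) → U a // Meas (I a) f})).symm (lamP, lamO) a.1).1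
            (ω, u) = u a.1 then (1:ℝ) else 0) =
        ∏ a : {a : A // ¬ pl a = p}, if (lamO a).1 (ω, u) = u a.1 then (1:ℝ) else 0 := by
      apply Finset.prod_congr rfl
      intro a _
      rw [hB a]
    rw [h1, h2, h3, h4]
    ring
  rw [split μp, split (fun lamP => ∏ a : {a : A // pl a = p}, piAg pl I p hφ hI μp a (lamP a))]
  congr 1
  exact kuhn_main pl I p hφ hI μp hpr hμp.1 hμp.2 (ω, u)


theorem kuhn_equivalence_for_W_games
    {Ω A P : Type*} [Fintype Ω] [Fintype A] [Fintype P]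
    {U : A → Type*} [∀ c, Fintype (U c)]
    (pl : A → P)
    (I : A → Set (Set (Ω × ∀ c, U c))) (hI : ∀ c, IsSetField (I c))
    (φ : (Ω × ∀ c, U c) → Fin (Fintype.card A) → A)
    (hφ : ∀ h, Function.Bijective (φ h))
    (hc : Causal φ I)
    (p : P) (hpr : PerfectRecall φ I {a : A | pl a = p})
    -- solvability: `M` is the solution map of the closed-loop equations
    (M : (∀ a : A, {f : (Ω × ∀ c, U c) → U a // Meas (I a) f}) → Ω → ∀ a, U a)
    (hM : ∀ lam ω, ∀ a : A, (lam a).1 (ω, M lam ω) = M lam ω a)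
    (hMuniq : ∀ lam ω (u : ∀ a, U a), (∀ a : A, (lam a).1 (ω, u) = u a) → u = M lam ω)
    -- a mixed W-strategy of player `p`
    (μp : (∀ a : {a : A // pl a = p},
        {f : (Ω × ∀ c, U c) → U a.1 // Meas (I a.1) f}) → ℝ)
    (hμp : (∀ x, 0 ≤ μp x) ∧ ∑ x, μp x = 1) :
    -- there is a product-mixed W-strategy of player `p` inducing, whatever the mixed
    -- strategies of the other players, the same pushforward distribution on decisions
    ∃ π : ∀ a : {a : A // pl a = p},
        ({f : (Ω × ∀ c, U c) → U a.1 // Meas (I a.1) f} → ℝ),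
      (∀ a, (∀ x, 0 ≤ π a x) ∧ ∑ x, π a x = 1) ∧
      ∀ μo : ∀ q : {q : P // q ≠ p},
          ((∀ a : {a : A // pl a = q.1},
            {f : (Ω × ∀ c, U c) → U a.1 // Meas (I a.1) f}) → ℝ),
        (∀ q, (∀ x, 0 ≤ μo q x) ∧ ∑ x, μo q x = 1) →
        ∀ (ω : Ω) (u : ∀ a, U a),
          (∑ lam : ∀ a : A, {f : (Ω × ∀ c, U c) → U a // Meas (I a) f},
            if M lam ω = u then
              μp (fun a => lam a.1) *
                ∏ q : {q : P // q ≠ p}, μo q (fun a => lam a.1)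
            else 0)
          =
          (∑ lam : ∀ a : A, {f : (Ω × ∀ c, U c) → U a // Meas (I a) f},
            if M lam ω = u then
              (∏ a : {a : A // pl a = p}, π a (lam a.1)) *
                ∏ q : {q : P // q ≠ p}, μo q (fun a => lam a.1)
            else 0) := by
  exact kuhn_equivalence_for_W_games_aux pl I hI φ hφ p hpr M hM hMuniq μp hμp
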